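/- Let M > 1, R ≥ 0, σ ≥ 0 be real numbers and set α = 2/(M+1). For signs s₀, s₁ ∈ {−1, +1} define x₁(s₀) = R − α(MR + s₀σ) and x₂(s₀,s₁) = x₁(s₀) − α(M·x₁(s₀) + s₁σ). Then the average of x₂(s₀,s₁)² over the four sign choices equals ((M−1)/(M+1))⁴·R² + (8(1+M²)/(M+1)⁴)·σ²; that is, (1/4)·∑_{s₀∈{−1,1}} ∑_{s₁∈{−1,1}} x₂(s₀,s₁)² = ((M−1)/(M+1))⁴ R² + 8(1+M²)/(1+M)⁴ σ². -/
import Mathlib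

theorem stmt_19 (M R σ : ℝ) (hM : 1 < M) (hR : 0 ≤ R) (hσ : 0 ≤ σ) :
    let α : ℝ := 2 / (M + 1)
    let x₁ : ℝ → ℝ := fun s₀ => R - α * (M * R + s₀ * σ)
    let x₂ : ℝ → ℝ → ℝ := fun s₀ s₁ => x₁ s₀ - α * (M * x₁ s₀ + s₁ * σ)
    (1 / 4) * ∑ s₀ ∈ ({-1, 1} : Finset ℝ), ∑ s₁ ∈ ({-1, 1} : Finset ℝ), (x₂ s₀ s₁) ^ 2
      = ((M - 1) / (M + 1)) ^ 4 * R ^ 2 + 8 * (1 + M ^ 2) / (1 + M) ^ 4 * σ ^ 2 := by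
  have h : M + 1 ≠ 0 := by linarith
  simp only [Finset.sum_insert, Finset.mem_singleton, Finset.sum_singleton]
  norm_num
  field_simp
  ring
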